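/- Let A, B be 2×2 complex matrices satisfying condition (*) (i.e., the 2×4 matrix (A B) obtained by horizontal concatenation has rank 2, and A J A* = B J B* with J = [[0,-1],[1,0]]). Then the intersection of the column spaces of A and B (the ranges of the linear maps x ↦ A x and x ↦ B x on ℂ²) equals {0} if and only if rank(A) = rank(B) = 1. -/

import Mathlib

open Matrix

/-- The matrix `J = [[0,-1],[1,0]]`. -/
def Jmat : Matrix (Fin 2) (Fin 2) ℂ := !![0, -1; 1, 0]

lemma Jmat_det : Jmat.det = 1 := by
  simp [Jmat]

lemma range_fromColumns_eq (A B : Matrix (Fin 2) (Fin 2) ℂ) :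
    LinearMap.range (Matrix.fromCols A B).mulVecLin =
      LinearMap.range A.mulVecLin ⊔ LinearMap.range B.mulVecLin := by
  apply le_antisymm
  · rintro v ⟨x, rfl⟩
    have hx : x = Sum.elim (x ∘ Sum.inl) (x ∘ Sum.inr) := by ext (i | i) <;> rfl
    have : (fromCols A B).mulVecLin x
        = A.mulVec (x ∘ Sum.inl) + B.mulVec (x ∘ Sum.inr) := by
      conv_lhs => rw [mulVecLin_apply, hx, fromCols_mulVec_sumElim]
    rw [this]
    exact Submodule.add_mem_sup ⟨_, rfl⟩ ⟨_, rfl⟩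
  · rw [sup_le_iff]
    constructor
    · rintro v ⟨x, rfl⟩
      exact ⟨Sum.elim x 0, by simp⟩
    · rintro v ⟨x, rfl⟩
      exact ⟨Sum.elim 0 x, by simp⟩

lemma rank_two_no_zero (M : Matrix (Fin 2) (Fin 2) ℂ) (h2 : M.rank = 2)
    (h0 : M * Jmat * Mᴴ = 0) : False := by
  have htop : LinearMap.range M.mulVecLin = ⊤ := by
    apply Submodule.eq_top_of_finrank_eq
    rw [show Module.finrank ℂ (Fin 2 → ℂ) = 2 by simp]
    exact h2
  have hsurj : Function.Surjective M.mulVec := by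
    intro v
    obtain ⟨x, hx⟩ := LinearMap.range_eq_top.mp htop v
    exact ⟨x, hx⟩
  have hu : IsUnit M.det :=
    (Matrix.isUnit_iff_isUnit_det M).mp (Matrix.mulVec_surjective_iff_isUnit.mp hsurj)
  have hd := congrArg Matrix.det h0
  have : Matrix.det (0 : Matrix (Fin 2) (Fin 2) ℂ) = 0 := det_zero
  rw [Matrix.det_mul, Matrix.det_mul, Jmat_det, det_conjTranspose, this] at hd
  have : M.det ≠ 0 := hu.ne_zero
  simp only [mul_one] at hd
  exact this (by
    rcases mul_eq_zero.mp hd with h | h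
    · exact h
    · exact star_eq_zero.mp h ▸ star_eq_zero.mp h)

lemma rank_zero_eq_zero (M : Matrix (Fin 2) (Fin 2) ℂ) (h0 : M.rank = 0) : M = 0 := by
  have : LinearMap.range M.mulVecLin = ⊥ := Submodule.finrank_eq_zero.mp h0
  have hz : M.mulVecLin = 0 := LinearMap.range_eq_bot.mp this
  ext i j
  have := congrArg (fun f => (f : (Fin 2 → ℂ) →ₗ[ℂ] (Fin 2 → ℂ)) (Pi.single j 1) i) hz
  simpa [mulVecLin_apply, Matrix.mulVec_single] using this

/-- Lemma 2.3(ii): under condition (*), the column spaces of `A` and `B`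
intersect trivially iff `rank A = rank B = 1`. -/
theorem colSpace_inter_trivial_iff_rank_one (A B : Matrix (Fin 2) (Fin 2) ℂ)
    (hrank : (Matrix.fromCols A B).rank = 2)
    (hsym : A * Jmat * Aᴴ = B * Jmat * Bᴴ) :
    (LinearMap.range A.mulVecLin ⊓ LinearMap.range B.mulVecLin = ⊥) ↔
      (A.rank = 1 ∧ B.rank = 1) := by
  set SA := LinearMap.range A.mulVecLin with hSA
  set SB := LinearMap.range B.mulVecLin with hSB
  have hsup : Module.finrank ℂ ↥(SA ⊔ SB) = 2 := by
    rw [hSA, hSB, ← range_fromColumns_eq]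
    exact hrank
  have hdim := Submodule.finrank_sup_add_finrank_inf_eq SA SB
  rw [hsup] at hdim
  have hrA : A.rank = Module.finrank ℂ SA := rfl
  have hrB : B.rank = Module.finrank ℂ SB := rfl
  constructor
  · intro h
    rw [h, finrank_bot, add_zero] at hdim
    have hAle : A.rank ≤ 2 := by
      simpa using A.rank_le_card_width
    have hBle : B.rank ≤ 2 := by
      simpa using B.rank_le_card_width
    rw [← hrA, ← hrB] at hdim
    have hA0 : A.rank ≠ 0 := by
      intro h0
      have hB2 : B.rank = 2 := by omega
      apply rank_two_no_zero B hB2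
      rw [← hsym, rank_zero_eq_zero A h0]
      simp
    have hB0 : B.rank ≠ 0 := by
      intro h0
      have hA2 : A.rank = 2 := by omega
      apply rank_two_no_zero A hA2
      rw [hsym, rank_zero_eq_zero B h0]
      simp
    omega
  · rintro ⟨hA1, hB1⟩
    rw [← hrA, ← hrB, hA1, hB1] at hdim
    have : Module.finrank ℂ ↥(SA ⊓ SB) = 0 := by omega
    exact Submodule.finrank_eq_zero.mp this
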